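/- For every θ < 0 and T > 0, if θ = (1/2)·(T + 2e^{−T} + e^{−T}T − 2)/(1 + e^{−T}), then the function T ↦ (1/2)·(T + 2e^{−T} + e^{−T}T − 2)/(1 + e^{−T}) is strictly increasing on (0,∞), tends to 0 as T → 0⁺, and tends to +∞ as T → ∞; hence it never takes negative values. (Equivalently: the parametrization of the switching point of the small periodic orbit is well-defined and monotone in the travel time T.) -/

import Mathlib

noncomputable def gFun : ℝ → ℝ := fun T =>
  (T + 2 * Real.exp (-T) + Real.exp (-T) * T - 2) / (2 * (1 + Real.exp (-T)))

lemma gFun_eq (T : ℝ) : gFun T = T / 2 - 1 + 2 * (Real.exp T + 1)⁻¹ := by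
  have h1 : Real.exp (-T) = (Real.exp T)⁻¹ := Real.exp_neg T
  have h2 : (0:ℝ) < Real.exp T := Real.exp_pos T
  rw [gFun, h1]
  field_simp
  ring

lemma gFun_hasDerivAt (x : ℝ) :
    HasDerivAt gFun (1/2 + 2 * (-(Real.exp x) / (Real.exp x + 1)^2)) x := by
  have h2 : Real.exp x + 1 ≠ 0 := by positivity
  have h : HasDerivAt (fun T : ℝ => T / 2 - 1 + 2 * (Real.exp T + 1)⁻¹)
      (1/2 + 2 * (-(Real.exp x) / (Real.exp x + 1)^2)) x := by
    have hd : HasDerivAt (fun T : ℝ => (Real.exp T + 1)⁻¹)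
        (-(Real.exp x) / (Real.exp x + 1)^2) x :=
      ((Real.hasDerivAt_exp x).add_const 1).inv h2
    have h1 : HasDerivAt (fun T : ℝ => T / 2 - 1) (1/2) x := by
      simpa using ((hasDerivAt_id x).div_const 2).sub_const 1
    exact h1.add (hd.const_mul 2)
  exact h.congr_of_eventuallyEq (Filter.Eventually.of_forall fun T => gFun_eq T)

lemma gFun_deriv_pos {x : ℝ} (hx : 0 < x) : 0 < deriv gFun x := by
  rw [(gFun_hasDerivAt x).deriv]
  have hu : 1 < Real.exp x := by
    have := Real.exp_lt_exp.mpr hx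
    simpa using this
  have hp : (0:ℝ) < (Real.exp x + 1)^2 := by positivity
  have : -(Real.exp x) / (Real.exp x + 1)^2 > -(1/4) := by
    rw [gt_iff_lt, neg_div, neg_lt_neg_iff, div_lt_iff₀ hp]
    nlinarith
  linarith

lemma gFun_cont : Continuous gFun := by
  apply Continuous.div
  · continuity
  · continuity
  · intro x
    have := Real.exp_pos (-x)
    positivity

lemma gFun_smono : StrictMonoOn gFun (Set.Ici 0) := by
  apply strictMonoOn_of_deriv_pos (convex_Ici 0) gFun_cont.continuousOn
  intro x hx
  rw [interior_Ici] at hx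
  exact gFun_deriv_pos hx

lemma gFun_zero : gFun 0 = 0 := by
  rw [gFun_eq]; norm_num

lemma gFun_atTop : Filter.Tendsto gFun Filter.atTop Filter.atTop := by
  apply Filter.tendsto_atTop_mono (f := fun T : ℝ => T / 2 - 1)
  · intro T
    rw [gFun_eq]
    have : (0:ℝ) < Real.exp T + 1 := by positivity
    have : 0 ≤ 2 * (Real.exp T + 1)⁻¹ := by positivity
    linarith
  · exact Filter.tendsto_atTop_add_const_right _ (-1)
      (Filter.Tendsto.atTop_div_const (by norm_num) Filter.tendsto_id)

/-- The function g(T) = (T + 2e^{−T} + Te^{−T} − 2)/(2(1+e^{−T}))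
is strictly increasing on (0,∞), tends to 0 as T → 0⁺, tends to +∞ as T → ∞,
and never takes negative values on (0,∞). -/
theorem switching_point_parametrization_monotone :
    let g : ℝ → ℝ := fun T =>
      (T + 2 * Real.exp (-T) + Real.exp (-T) * T - 2) / (2 * (1 + Real.exp (-T)))
    StrictMonoOn g (Set.Ioi 0) ∧
    Filter.Tendsto g (nhdsWithin 0 (Set.Ioi 0)) (nhds 0) ∧
    Filter.Tendsto g Filter.atTop Filter.atTop ∧
    (∀ T : ℝ, 0 < T → 0 ≤ g T) := by
  intro g
  have hg : g = gFun := rfl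
  rw [hg]
  refine ⟨gFun_smono.mono (Set.Ioi_subset_Ici le_rfl), ?_, gFun_atTop, ?_⟩
  · have h := (gFun_cont.continuousAt (x := 0)).continuousWithinAt (s := Set.Ioi 0)
    rwa [ContinuousWithinAt, gFun_zero] at h
  · intro T hT
    have := gFun_smono (Set.self_mem_Ici) (Set.mem_Ici.mpr hT.le) hT
    rw [gFun_zero] at this
    exact this.le
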